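/- For the ellipse x²/a² + a²y² = 1 with a ≥ 1 and eccentricity e = √(1 − 1/a⁴), the quantity Q₁ := ∫_{∂Ω} |∇u₀|² ds equals (4/3)·a³/(1+a⁴)²·(2(1+a⁴)E(e) − K(e)), where u₀ = (1 − x²/a² − a²y²)/(2(a² + 1/a²)) and E, K are the complete elliptic integrals of the second and first kind. -/

import Mathlib

open Real MeasureTheory

lemma sym_lemma (g : ℝ → ℝ) (hg : Continuous g) :
    ∫ ψ in (0:ℝ)..(2*π), g (Real.cos ψ ^ 2)
      = 4 * ∫ θ in (0:ℝ)..(π/2), g (Real.sin θ ^ 2) := by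
  have hc : Continuous fun ψ => g (Real.cos ψ ^ 2) := hg.comp (by continuity)
  have hint : ∀ a b : ℝ, IntervalIntegrable (fun ψ => g (Real.cos ψ ^ 2)) volume a b :=
    fun a b => hc.intervalIntegrable a b
  have h1 : ∫ ψ in (π:ℝ)..(2*π), g (Real.cos ψ ^ 2)
      = ∫ ψ in (0:ℝ)..π, g (Real.cos ψ ^ 2) := by
    have := intervalIntegral.integral_comp_add_right (fun ψ => g (Real.cos ψ ^ 2)) π
      (a := 0) (b := π)
    rw [zero_add] at this
    rw [show (2*π) = π + π by ring, ← this]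
    apply intervalIntegral.integral_congr
    intro x _
    simp [Real.cos_add_pi, neg_pow]
  have h2 : ∫ ψ in (π/2:ℝ)..π, g (Real.cos ψ ^ 2)
      = ∫ ψ in (0:ℝ)..(π/2), g (Real.cos ψ ^ 2) := by
    have := intervalIntegral.integral_comp_sub_left (fun ψ => g (Real.cos ψ ^ 2)) π
      (a := 0) (b := π/2)
    rw [sub_zero, show π - π/2 = π/2 by ring] at this
    rw [← this]
    apply intervalIntegral.integral_congr
    intro x _
    simp [Real.cos_pi_sub, neg_pow]
  have h3 : ∫ ψ in (0:ℝ)..(π/2), g (Real.cos ψ ^ 2)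
      = ∫ θ in (0:ℝ)..(π/2), g (Real.sin θ ^ 2) := by
    have := intervalIntegral.integral_comp_sub_left (fun ψ => g (Real.cos ψ ^ 2)) (π/2)
      (a := 0) (b := π/2)
    rw [sub_zero, sub_self] at this
    rw [← this]
    apply intervalIntegral.integral_congr
    intro x _
    simp [Real.cos_pi_div_two_sub]
  have s1 := intervalIntegral.integral_add_adjacent_intervals (a := (0:ℝ)) (b := π) (c := 2*π)
    (hint 0 π) (hint π (2*π))
  have s2 := intervalIntegral.integral_add_adjacent_intervals (a := (0:ℝ)) (b := π/2) (c := π)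
    (hint 0 (π/2)) (hint (π/2) π)
  rw [← s1, h1, ← s2, h2, h3]; ring


lemma ell_cube (m : ℝ) (hm0 : 0 ≤ m) (hm1 : m < 1) :
    ∫ θ in (0:ℝ)..(π/2), (1 - m * Real.sin θ ^ 2) * Real.sqrt (1 - m * Real.sin θ ^ 2)
      = (2*(2-m)/3) * (∫ θ in (0:ℝ)..(π/2), Real.sqrt (1 - m * Real.sin θ ^ 2))
        - ((1-m)/3) * (∫ θ in (0:ℝ)..(π/2), 1 / Real.sqrt (1 - m * Real.sin θ ^ 2)) := by
  set D : ℝ → ℝ := fun θ => 1 - m * Real.sin θ ^ 2 with hD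
  have hDpos : ∀ θ, 0 < D θ := by
    intro θ
    have h1 : m * Real.sin θ ^ 2 ≤ m * 1 := by
      apply mul_le_mul_of_nonneg_left _ hm0
      rw [← Real.sin_sq_add_cos_sq θ]; nlinarith [sq_nonneg (Real.cos θ)]
    simp only [hD]; nlinarith
  have hcontD : Continuous D := by simp only [hD]; continuity
  have hsq : Continuous fun θ => Real.sqrt (D θ) := hcontD.sqrt
  have hsqne : ∀ θ, Real.sqrt (D θ) ≠ 0 := fun θ => (Real.sqrt_pos.2 (hDpos θ)).ne'
  have hinv : Continuous fun θ => 1 / Real.sqrt (D θ) :=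
    continuous_const.div hsq hsqne
  -- antiderivative
  set F : ℝ → ℝ := fun θ => (m/3) * (Real.sin θ * Real.cos θ * Real.sqrt (D θ)) with hF
  have hderiv : ∀ θ, HasDerivAt F
      (D θ * Real.sqrt (D θ) - (2*(2-m)/3) * Real.sqrt (D θ)
        - ((m-1)/3) * (1 / Real.sqrt (D θ))) θ := by
    intro θ
    have hs := Real.hasDerivAt_sin θ
    have hc := Real.hasDerivAt_cos θ
    have hDd : HasDerivAt D (-(m * (2 * Real.sin θ * Real.cos θ))) θ := by
      have := ((hs.pow 2).const_mul m).const_sub 1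
      simpa [hD, mul_comm, mul_assoc, mul_left_comm] using this
    have hr : HasDerivAt (fun θ => Real.sqrt (D θ))
        (-(m * (2 * Real.sin θ * Real.cos θ)) / (2 * Real.sqrt (D θ))) θ :=
      hDd.sqrt (hDpos θ).ne'
    have h1 : HasDerivAt (fun θ => Real.sin θ * Real.cos θ * Real.sqrt (D θ))
        ((Real.cos θ * Real.cos θ + Real.sin θ * (-Real.sin θ)) * Real.sqrt (D θ)
          + Real.sin θ * Real.cos θ *
            (-(m * (2 * Real.sin θ * Real.cos θ)) / (2 * Real.sqrt (D θ)))) θ :=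
      (hs.mul hc).mul hr
    have h2 := h1.const_mul (m/3)
    convert h2 using 1
    · rfl
    · rfl
    have hr2 : Real.sqrt (D θ) ^ 2 = D θ := Real.sq_sqrt (hDpos θ).le
    have hpyth : Real.sin θ ^ 2 + Real.cos θ ^ 2 = 1 := Real.sin_sq_add_cos_sq θ
    have hDval : D θ = 1 - m * Real.sin θ ^ 2 := rfl
    field_simp [hsqne θ]
    linear_combination (3*D θ - 4 + 2*m - m*(Real.cos θ^2 - Real.sin θ^2)) * hr2
      + (3*(D θ + 1 - m*Real.sin θ^2) - 4 + m + 2*m*Real.sin θ^2) * hDval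
      + (-m*D θ + m^2*Real.sin θ^2) * hpyth
  have hcont3 : Continuous fun θ => D θ * Real.sqrt (D θ) - (2*(2-m)/3) * Real.sqrt (D θ)
      - ((m-1)/3) * (1 / Real.sqrt (D θ)) := by
    apply Continuous.sub
    apply Continuous.sub (hcontD.mul hsq) (continuous_const.mul hsq)
    exact continuous_const.mul hinv
  have key := intervalIntegral.integral_eq_sub_of_hasDerivAt
    (f := F) (a := 0) (b := π/2) (fun x _ => hderiv x)
    (hcont3.intervalIntegrable 0 (π/2))
  have hF0 : F 0 = 0 := by simp [hF]
  have hFpi : F (π/2) = 0 := by simp [hF]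
  rw [hF0, hFpi, sub_zero] at key
  have i1 : IntervalIntegrable (fun θ => D θ * Real.sqrt (D θ)) volume 0 (π/2) :=
    (hcontD.mul hsq).intervalIntegrable 0 (π/2)
  have i2 : IntervalIntegrable (fun θ => (2*(2-m)/3) * Real.sqrt (D θ)) volume 0 (π/2) :=
    (continuous_const.mul hsq).intervalIntegrable 0 (π/2)
  have i3 : IntervalIntegrable (fun θ => ((m-1)/3) * (1 / Real.sqrt (D θ))) volume 0 (π/2) :=
    (continuous_const.mul hinv).intervalIntegrable 0 (π/2)
  rw [intervalIntegral.integral_sub (i1.sub i2) i3, intervalIntegral.integral_sub i1 i2,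
    intervalIntegral.integral_const_mul, intervalIntegral.integral_const_mul] at key
  simp only [hD] at key ⊢
  linarith [key]

/-- For the ellipse `x²/a² + a²y² = 1` (`a ≥ 1`, eccentricity `e = √(1−1/a⁴)`),
`Q₁ = ∫_{∂Ω} |∇u₀|² ds = (4/3)·a³/(1+a⁴)²·(2(1+a⁴)E(e) − K(e))`, the boundary
integral computed by the parametrization `(a cos ψ, (1/a) sin ψ)`. -/
theorem stmt4 (a : ℝ) (ha : 1 ≤ a) (e E K : ℝ)
    (he : e = Real.sqrt (1 - 1/a^4))
    (hE : E = ∫ θ in (0:ℝ)..(π/2), Real.sqrt (1 - e^2 * Real.sin θ^2))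
    (hK : K = ∫ θ in (0:ℝ)..(π/2), 1/Real.sqrt (1 - e^2 * Real.sin θ^2)) :
    (∫ ψ in (0:ℝ)..(2*π),
        (((a*Real.cos ψ)^2/a^4 + a^4*((Real.sin ψ)/a)^2)/(a^2 + 1/a^2)^2) *
          Real.sqrt (a^2*Real.sin ψ^2 + Real.cos ψ^2/a^2))
      = 4/3 * (a^3/(1+a^4)^2) * (2*(1+a^4)*E - K) := by
  have ha0 : (0:ℝ) < a := lt_of_lt_of_le one_pos ha
  have ha4 : (1:ℝ) ≤ a^4 := by nlinarith [sq_nonneg (a-1), sq_nonneg (a^2-1), sq_nonneg a]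
  have ha4p : (0:ℝ) < a^4 := by positivity
  set m : ℝ := 1 - 1/a^4 with hm
  have hm0 : 0 ≤ m := by
    rw [hm]
    have : 1/a^4 ≤ 1 := by rw [div_le_one ha4p]; exact ha4
    linarith
  have hm1 : m < 1 := by
    rw [hm]
    have : 0 < 1/a^4 := by positivity
    linarith
  have he2 : e^2 = m := by
    rw [he, Real.sq_sqrt hm0]
  rw [he2] at hE hK
  -- pointwise rewrite of the integrand
  have hpt : ∀ ψ : ℝ,
      (((a*Real.cos ψ)^2/a^4 + a^4*((Real.sin ψ)/a)^2)/(a^2 + 1/a^2)^2) *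
          Real.sqrt (a^2*Real.sin ψ^2 + Real.cos ψ^2/a^2)
        = (a^7/(1+a^4)^2) * ((1 - m * Real.cos ψ ^ 2) * Real.sqrt (1 - m * Real.cos ψ ^ 2)) := by
    intro ψ
    have hpyth : Real.sin ψ ^ 2 + Real.cos ψ ^ 2 = 1 := Real.sin_sq_add_cos_sq ψ
    have key : a^2*Real.sin ψ^2 + Real.cos ψ^2/a^2 = a^2 * (1 - m * Real.cos ψ ^ 2) := by
      rw [hm]; field_simp; linear_combination a^4 * hpyth
    have key1 : (a*Real.cos ψ)^2/a^4 + a^4*((Real.sin ψ)/a)^2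
        = a^2*(1 - m*Real.cos ψ^2) := by
      rw [← key]; field_simp; ring
    have key3 : a^2 + 1/a^2 = (1+a^4)/a^2 := by field_simp; ring
    have h14 : (1:ℝ) + a^4 ≠ 0 := by positivity
    rw [key, key1, key3, Real.sqrt_mul (sq_nonneg a), Real.sqrt_sq ha0.le]
    field_simp
  rw [intervalIntegral.integral_congr (fun ψ _ => hpt ψ),
    intervalIntegral.integral_const_mul]
  have hgc : Continuous fun t : ℝ => (1 - m * t) * Real.sqrt (1 - m * t) := by
    apply Continuous.mul (by continuity)
    exact (by continuity : Continuous fun t : ℝ => 1 - m * t).sqrt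
  rw [sym_lemma _ hgc, ell_cube m hm0 hm1, ← hE, ← hK]
  have h14 : (1:ℝ) + a^4 ≠ 0 := by positivity
  rw [hm]
  field_simp
  ring
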